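/- (Structure condition for the HJB Hamiltonian.) Let Φ₀ > 0 and U = ℝ × (0,Φ₀) × (0,∞). Let σ̂, b̂ : [0,∞) → ℝ be Lipschitz continuous, let h : [0,∞) → [0,∞) be continuous and strictly increasing with lim_{ζ→∞} h(ζ) = ∞ and liminf_{ζ→∞} h(ζ)/ζ > 0, and let g(ζ) = ∫₀^ζ h(ζ') dζ'. For z = (z_w, z_φ, z_s) ∈ U, p = (p_w, p_φ, p_s) ∈ ℝ³ and a symmetric real 3×3 matrix X with entries X_{ij} (i,j ∈ {w,φ,s}), define F(z,p,X) = − sup_{ζ ≥ 0} { (1/2)·σ̂(z_s)²·X_{ss} + b̂(z_s)·p_s + ζ·(z_s·p_w − p_φ) − g(ζ)·z_s·p_s } ∈ [−∞,∞). Then there exists a constant C > 0, depending only on σ̂, b̂ and g, such that: for all α > 1, all z, z' ∈ U, and all symmetric real 3×3 matrices X, Y satisfying F(z', α(z−z'), Y) ≥ 0 and the block matrix inequality −3α·I₆ ≤ [[X, 0],[0, −Y]] ≤ 3α·[[I, −I],[−I, I]] (inequalities in the sense of symmetric 6×6 matrices, I the 3×3 identity), one has F(z, α(z−z'), X) > −∞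 and F(z', α(z−z'), Y) − F(z, α(z−z'), X) ≤ C·( α·|z−z'|² + |z−z'| ), where |z−z'| is the Euclidean norm on ℝ³. -/

import Mathlib

lemma aux_quad_unbounded (q a K c : ℝ) (hq : 0 < q)
    (h : ∀ ζ ≥ (0:ℝ), K + ζ * a + q * ζ ^ 2 ≤ c) : False := by
  set ζ : ℝ := max (max ((|a| + 1) / q) (c - K + 1)) 0 with hζdef
  have hζ0 : (0:ℝ) ≤ ζ := le_max_right _ _
  have h1 : (|a| + 1) / q ≤ ζ := le_trans (le_max_left _ _) (le_max_left _ _)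
  have h2 : c - K + 1 ≤ ζ := le_trans (le_max_right _ _) (le_max_left _ _)
  have h3 := h ζ hζ0
  have h4 : |a| + 1 ≤ q * ζ := by rwa [div_le_iff₀ hq, mul_comm] at h1
  nlinarith [neg_abs_le a, abs_nonneg a]

lemma aux_lin_unbounded (a K : ℝ) (ha : 0 < a)
    (h : ∀ ζ ≥ (0:ℝ), K + ζ * a ≤ 0) : False := by
  have h1 := h (max ((1 - K) / a) 0) (le_max_right _ _)
  have h2 : (1 - K) / a ≤ max ((1 - K) / a) 0 := le_max_left _ _
  rw [div_le_iff₀ ha] at h2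
  nlinarith

lemma matrix_block_bound (X Y : Matrix (Fin 3) (Fin 3) ℝ) (α s t : ℝ)
    (hPSD : ((3 * α) • Matrix.fromBlocks (1 : Matrix (Fin 3) (Fin 3) ℝ) (-1) (-1) 1 -
      Matrix.fromBlocks X 0 0 (-Y)).PosSemidef) :
    s ^ 2 * X 2 2 - t ^ 2 * Y 2 2 ≤ 3 * α * (s - t) ^ 2 := by
  have h2 := hPSD.dotProduct_mulVec_nonneg (Sum.elim (fun i => if i = 2 then s else 0) (fun i => if i = 2 then t else 0))
  simp [Matrix.mulVec, dotProduct, Fintype.sum_sum_type, Fin.sum_univ_three,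
    Matrix.fromBlocks, Matrix.one_apply] at h2
  nlinarith [h2]

lemma ereal_sSup_eq {f : ℝ → ℝ} {M : ℝ} (hle : ∀ ζ, 0 ≤ ζ → f ζ ≤ M) :
    ∃ s : ℝ, sSup ((fun ζ => ((f ζ : ℝ) : EReal)) '' Set.Ici 0) = (s : EReal)
      ∧ f 0 ≤ s ∧ s ≤ M ∧ ∀ ζ, 0 ≤ ζ → f ζ ≤ s := by
  set S := sSup ((fun ζ => ((f ζ : ℝ) : EReal)) '' Set.Ici 0) with hSdef
  have h1 : ((f 0 : ℝ) : EReal) ≤ S := le_sSup ⟨0, Set.self_mem_Ici, rfl⟩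
  have h2 : S ≤ (M : EReal) := by
    apply sSup_le
    rintro x ⟨ζ, hζ, rfl⟩
    exact EReal.coe_le_coe_iff.2 (hle ζ hζ)
  have hbot : S ≠ ⊥ := fun hS => by simp [hS] at h1
  have htop : S ≠ ⊤ := fun hS => by simp [hS] at h2
  have hco : S = ((S.toReal : ℝ) : EReal) := (EReal.coe_toReal htop hbot).symm
  refine ⟨S.toReal, hco, ?_, ?_, ?_⟩
  · exact EReal.coe_le_coe_iff.1 (hco ▸ h1)
  · exact EReal.coe_le_coe_iff.1 (hco ▸ h2)
  · intro ζ hζ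
    have : ((f ζ : ℝ) : EReal) ≤ S := le_sSup ⟨ζ, Set.mem_Ici.2 hζ, rfl⟩
    exact EReal.coe_le_coe_iff.1 (hco ▸ this)

lemma g_props (h g : ℝ → ℝ) (hh_cont : ContinuousOn h (Set.Ici 0))
    (hh_nonneg : ∀ x ≥ (0:ℝ), 0 ≤ h x)
    (hg : ∀ ζ : ℝ, g ζ = ∫ x in (0:ℝ)..ζ, h x)
    (ε ζ₁ : ℝ) (hε : 0 < ε) (hlin : ∀ ζ ≥ ζ₁, ε * ζ ≤ h ζ) :
    (∀ ζ ≥ (0:ℝ), 0 ≤ g ζ) ∧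
    (∀ ζ ≥ (0:ℝ), ε / 2 * ζ ^ 2 - ε / 2 * (max ζ₁ 0) ^ 2 ≤ g ζ) := by
  have hint : ∀ a b : ℝ, 0 ≤ a → a ≤ b → IntervalIntegrable h MeasureTheory.volume a b := by
    intro a b ha hab
    apply ContinuousOn.intervalIntegrable
    apply hh_cont.mono
    rw [Set.uIcc_of_le hab]
    intro x hx
    exact le_trans ha hx.1
  have hg0 : ∀ ζ ≥ (0:ℝ), 0 ≤ g ζ := by
    intro ζ hζ
    rw [hg]
    apply intervalIntegral.integral_nonneg hζ
    intro u hu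
    exact hh_nonneg u hu.1
  refine ⟨hg0, ?_⟩
  set ζ₂ : ℝ := max ζ₁ 0 with hζ₂def
  have hζ₂0 : (0:ℝ) ≤ ζ₂ := le_max_right _ _
  intro ζ hζ
  rcases le_or_gt ζ ζ₂ with hc | hc
  · have hsq : ζ ^ 2 ≤ ζ₂ ^ 2 := pow_le_pow_left₀ hζ hc 2
    have : ε / 2 * ζ ^ 2 ≤ ε / 2 * ζ₂ ^ 2 := by nlinarith
    have := hg0 ζ hζ
    linarith
  · have hsplit : g ζ = (∫ x in (0:ℝ)..ζ₂, h x) + ∫ x in ζ₂..ζ, h x := by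
      rw [hg]
      rw [intervalIntegral.integral_add_adjacent_intervals (hint 0 ζ₂ le_rfl hζ₂0)
        (hint ζ₂ ζ hζ₂0 hc.le)]
    have h1 : 0 ≤ ∫ x in (0:ℝ)..ζ₂, h x := by
      apply intervalIntegral.integral_nonneg hζ₂0
      intro u hu; exact hh_nonneg u hu.1
    have h2 : (∫ x in ζ₂..ζ, ε * x) ≤ ∫ x in ζ₂..ζ, h x := by
      apply intervalIntegral.integral_mono_on hc.le
      · exact (continuous_const.mul continuous_id).intervalIntegrable _ _
      · exact hint ζ₂ ζ hζ₂0 hc.le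
      · intro x hx
        exact hlin x (le_trans (le_max_left _ _) hx.1)
    have h3 : (∫ x in ζ₂..ζ, ε * x) = ε / 2 * ζ ^ 2 - ε / 2 * ζ₂ ^ 2 := by
      rw [intervalIntegral.integral_const_mul]
      rw [integral_id]
      ring
    linarith


/-- The HJB Hamiltonian `F(z, p, X)` of the optimal execution problem, with values
in `EReal` (it takes values in `[-∞, ∞)`): coordinates of `z, p ∈ ℝ³` are indexed
by `0 = w`, `1 = φ`, `2 = s`, and only the `ss` entry of `X` appears. -/
noncomputable def execHamiltonian (σ b g : ℝ → ℝ)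
    (z p : EuclideanSpace ℝ (Fin 3)) (X : Matrix (Fin 3) (Fin 3) ℝ) : EReal :=
  - sSup ((fun ζ : ℝ =>
      ((1 / 2 * σ (z 2) ^ 2 * X 2 2 + b (z 2) * p 2 +
        ζ * (z 2 * p 0 - p 1) - g ζ * z 2 * p 2 : ℝ) : EReal)) '' Set.Ici 0)

set_option maxHeartbeats 4000000 in
/-- the structure condition for the HJB Hamiltonian `F` on
`U = ℝ × (0,Φ₀) × (0,∞)`: there is a constant `C > 0` depending only on `σ̂`, `b̂`
and `g` such that, for `α > 1`, `z, z' ∈ U` and symmetric matrices `X, Y` with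
`F(z', α(z-z'), Y) ≥ 0` and `-3α I₆ ≤ [[X,0],[0,-Y]] ≤ 3α [[I,-I],[-I,I]]`, one
has `F(z, α(z-z'), X) > -∞` and
`F(z', α(z-z'), Y) - F(z, α(z-z'), X) ≤ C (α |z-z'|² + |z-z'|)`. -/
theorem hamiltonian_structure_condition (Φ₀ : ℝ) (hΦ₀ : 0 < Φ₀)
    (σ b h : ℝ → ℝ)
    (hσ : ∃ K : NNReal, LipschitzOnWith K σ (Set.Ici 0))
    (hb : ∃ K : NNReal, LipschitzOnWith K b (Set.Ici 0))
    (hh_cont : ContinuousOn h (Set.Ici 0))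
    (hh_mono : StrictMonoOn h (Set.Ici 0))
    (hh_nonneg : ∀ x ≥ (0 : ℝ), 0 ≤ h x)
    (hh_top : Filter.Tendsto h Filter.atTop Filter.atTop)
    (hh_liminf : ∃ ε > (0 : ℝ), ∃ ζ₁ : ℝ, ∀ ζ ≥ ζ₁, ε * ζ ≤ h ζ)
    (g : ℝ → ℝ) (hg : ∀ ζ : ℝ, g ζ = ∫ x in (0 : ℝ)..ζ, h x) :
    ∃ C > (0 : ℝ), ∀ α : ℝ, 1 < α →
      ∀ z z' : EuclideanSpace ℝ (Fin 3),
      z 1 ∈ Set.Ioo (0 : ℝ) Φ₀ → z 2 ∈ Set.Ioi (0 : ℝ) →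
      z' 1 ∈ Set.Ioo (0 : ℝ) Φ₀ → z' 2 ∈ Set.Ioi (0 : ℝ) →
      ∀ X Y : Matrix (Fin 3) (Fin 3) ℝ, X.IsSymm → Y.IsSymm →
      (0 : EReal) ≤ execHamiltonian σ b g z' (α • (z - z')) Y →
      (Matrix.fromBlocks X 0 0 (-Y) +
        (3 * α) • (1 : Matrix (Fin 3 ⊕ Fin 3) (Fin 3 ⊕ Fin 3) ℝ)).PosSemidef →
      ((3 * α) • Matrix.fromBlocks (1 : Matrix (Fin 3) (Fin 3) ℝ) (-1) (-1) 1 -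
        Matrix.fromBlocks X 0 0 (-Y)).PosSemidef →
      ⊥ < execHamiltonian σ b g z (α • (z - z')) X ∧
      execHamiltonian σ b g z' (α • (z - z')) Y -
          execHamiltonian σ b g z (α • (z - z')) X ≤
        ((C * (α * ‖z - z'‖ ^ 2 + ‖z - z'‖) : ℝ) : EReal) := by
  obtain ⟨Kσ, hKσ⟩ := hσ
  obtain ⟨Kb, hKb⟩ := hb
  obtain ⟨ε, hε, ζ₁, hlin⟩ := hh_liminf
  obtain ⟨hg0, hglb⟩ := g_props h g hh_cont hh_nonneg hg ε ζ₁ hε hlin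
  set c₀ : ℝ := ε / 2 * (max ζ₁ 0) ^ 2 with hc₀def
  have hc₀ : 0 ≤ c₀ := by positivity
  set C : ℝ := 3 * (Kσ:ℝ)^2 + (Kb:ℝ) + 1/(2*ε) + c₀ + 1 with hCdef
  have hC : 0 < C := by positivity
  refine ⟨C, hC, ?_⟩
  intro α hα z z' hz1 hz2 hz'1 hz'2 X Y hXs hYs hF' hPSD1 hPSD2
  have hα0 : (0:ℝ) < α := lt_trans one_pos hα
  have hz2' : (0:ℝ) < z 2 := hz2
  have hz'2' : (0:ℝ) < z' 2 := hz'2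
  set p := α • (z - z') with hpdef
  have hp0 : p 0 = α * (z 0 - z' 0) := rfl
  have hp1 : p 1 = α * (z 1 - z' 1) := rfl
  have hp2 : p 2 = α * (z 2 - z' 2) := rfl
  -- norm identity
  set N : ℝ := (z 0 - z' 0) ^ 2 + (z 1 - z' 1) ^ 2 + (z 2 - z' 2) ^ 2 with hNdef
  have hnorm : ‖z - z'‖ ^ 2 = N := by
    have h1 : ‖z - z'‖ = Real.sqrt N := by
      rw [EuclideanSpace.norm_eq]
      congr 1
      rw [hNdef]
      simp [Fin.sum_univ_three, Real.norm_eq_abs, sq_abs]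
    rw [h1, Real.sq_sqrt (by rw [hNdef]; positivity)]
  have hN0 : 0 ≤ N := by rw [hNdef]; positivity
  have hnn : 0 ≤ ‖z - z'‖ := norm_nonneg _
  -- key sup bound
  have key : ∀ (q a ζ : ℝ), 0 < q → 0 ≤ ζ →
      ζ * a - q * g ζ ≤ a ^ 2 / (2 * q * ε) + q * c₀ := by
    intro q a ζ hq hζ
    have h1 := hglb ζ hζ
    have h2 : ζ * a - q * (ε / 2 * ζ ^ 2) ≤ a ^ 2 / (2 * q * ε) := by
      rw [le_div_iff₀ (by positivity)]
      nlinarith [sq_nonneg (q * ε * ζ - a)]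
    have h3 : q * (ε / 2 * ζ ^ 2 - c₀) ≤ q * g ζ := mul_le_mul_of_nonneg_left h1 hq.le
    have h4 : q * (ε / 2 * ζ ^ 2 - c₀) = q * (ε / 2 * ζ ^ 2) - q * c₀ := by ring
    linarith
  -- the two real functions
  set fz : ℝ → ℝ := fun ζ => 1 / 2 * σ (z 2) ^ 2 * X 2 2 + b (z 2) * p 2 +
        ζ * (z 2 * p 0 - p 1) - g ζ * z 2 * p 2 with hfzdef
  set fz' : ℝ → ℝ := fun ζ => 1 / 2 * σ (z' 2) ^ 2 * Y 2 2 + b (z' 2) * p 2 +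
        ζ * (z' 2 * p 0 - p 1) - g ζ * z' 2 * p 2 with hfz'def
  have hHz : execHamiltonian σ b g z p X =
      - sSup ((fun ζ => ((fz ζ : ℝ) : EReal)) '' Set.Ici 0) := rfl
  have hHz' : execHamiltonian σ b g z' p Y =
      - sSup ((fun ζ => ((fz' ζ : ℝ) : EReal)) '' Set.Ici 0) := rfl
  have hfze : ∀ ζ : ℝ, fz ζ = 1 / 2 * σ (z 2) ^ 2 * X 2 2 + b (z 2) * (α * (z 2 - z' 2)) +
      ζ * (z 2 * (α * (z 0 - z' 0)) - α * (z 1 - z' 1)) - g ζ * z 2 * (α * (z 2 - z' 2)) := by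
    intro ζ
    simp only [hfzdef]
    rw [hp0, hp1, hp2]
  have hfz'e : ∀ ζ : ℝ, fz' ζ = 1 / 2 * σ (z' 2) ^ 2 * Y 2 2 + b (z' 2) * (α * (z 2 - z' 2)) +
      ζ * (z' 2 * (α * (z 0 - z' 0)) - α * (z 1 - z' 1)) - g ζ * z' 2 * (α * (z 2 - z' 2)) := by
    intro ζ
    simp only [hfz'def]
    rw [hp0, hp1, hp2]
  -- pointwise nonpositivity of fz'
  have hS'le : sSup ((fun ζ => ((fz' ζ : ℝ) : EReal)) '' Set.Ici 0) ≤ 0 := by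
    rw [hHz'] at hF'
    simpa using EReal.le_neg_of_le_neg hF'
  have hpt'0 : ∀ ζ, 0 ≤ ζ → fz' ζ ≤ 0 := by
    intro ζ hζ
    have hmem : ((fz' ζ : ℝ) : EReal) ∈ (fun ζ => ((fz' ζ : ℝ) : EReal)) '' Set.Ici 0 :=
      ⟨ζ, Set.mem_Ici.2 hζ, rfl⟩
    have h1 : ((fz' ζ : ℝ) : EReal) ≤ 0 := le_trans (le_sSup hmem) hS'le
    exact_mod_cast h1
  -- p-free version of pointwise bound
  have hpt' : ∀ ζ, 0 ≤ ζ → 1 / 2 * σ (z' 2) ^ 2 * Y 2 2 + b (z' 2) * (α * (z 2 - z' 2)) +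
      ζ * (z' 2 * (α * (z 0 - z' 0)) - α * (z 1 - z' 1)) -
      g ζ * z' 2 * (α * (z 2 - z' 2)) ≤ 0 := by
    intro ζ hζ
    have h1 := hpt'0 ζ hζ
    rwa [hfz'e] at h1
  -- sign of z 2 - z' 2
  have hd2nn : 0 ≤ z 2 - z' 2 := by
    by_contra hneg
    push_neg at hneg
    have hβ' : z' 2 * (α * (z 2 - z' 2)) < 0 :=
      mul_neg_of_pos_of_neg hz'2' (mul_neg_of_pos_of_neg hα0 hneg)
    apply aux_quad_unbounded (-(z' 2 * (α * (z 2 - z' 2))) * (ε / 2))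
      (z' 2 * (α * (z 0 - z' 0)) - α * (z 1 - z' 1))
      (1 / 2 * σ (z' 2) ^ 2 * Y 2 2 + b (z' 2) * (α * (z 2 - z' 2)))
      (-(z' 2 * (α * (z 2 - z' 2))) * c₀)
      (by nlinarith)
    intro ζ hζ
    have h1 := hpt' ζ hζ
    have h2 := hglb ζ hζ
    have h3 : (-(z' 2 * (α * (z 2 - z' 2)))) * (ε / 2 * ζ ^ 2 - c₀) ≤
        (-(z' 2 * (α * (z 2 - z' 2)))) * g ζ :=
      mul_le_mul_of_nonneg_left h2 (by linarith)
    nlinarith [h1, h3]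
  -- upper bound for fz
  have hMz : ∃ M : ℝ, ∀ ζ, 0 ≤ ζ → fz ζ ≤ M := by
    rcases eq_or_lt_of_le hd2nn with heq | hlt
    · -- z 2 = z' 2
      have ha' : z' 2 * (α * (z 0 - z' 0)) - α * (z 1 - z' 1) ≤ 0 := by
        by_contra hpos
        push_neg at hpos
        apply aux_lin_unbounded (z' 2 * (α * (z 0 - z' 0)) - α * (z 1 - z' 1))
          (1 / 2 * σ (z' 2) ^ 2 * Y 2 2 + b (z' 2) * (α * (z 2 - z' 2))) hpos
        intro ζ hζ
        have h1 := hpt' ζ hζ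
        rw [← heq] at h1 ⊢
        linarith
      refine ⟨1 / 2 * σ (z 2) ^ 2 * X 2 2, fun ζ hζ => ?_⟩
      rw [hfze, ← heq]
      have hz2eq : z 2 = z' 2 := by linarith
      rw [hz2eq]
      have h5 : ζ * (z' 2 * (α * (z 0 - z' 0)) - α * (z 1 - z' 1)) ≤ 0 :=
        mul_nonpos_of_nonneg_of_nonpos hζ ha'
      nlinarith [h5]
    · -- 0 < z 2 - z' 2
      have hq : 0 < z 2 * (α * (z 2 - z' 2)) := by positivity
      refine ⟨1 / 2 * σ (z 2) ^ 2 * X 2 2 + b (z 2) * (α * (z 2 - z' 2)) +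
        ((z 2 * (α * (z 0 - z' 0)) - α * (z 1 - z' 1)) ^ 2 /
          (2 * (z 2 * (α * (z 2 - z' 2))) * ε) + (z 2 * (α * (z 2 - z' 2))) * c₀),
        fun ζ hζ => ?_⟩
      rw [hfze]
      have hk := key (z 2 * (α * (z 2 - z' 2)))
        (z 2 * (α * (z 0 - z' 0)) - α * (z 1 - z' 1)) ζ hq hζ
      have hring : g ζ * z 2 * (α * (z 2 - z' 2)) = (z 2 * (α * (z 2 - z' 2))) * g ζ := by ring
      linarith [hk, hring.le, hring.ge]
  obtain ⟨Mz, hMzpt⟩ := hMz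
  obtain ⟨s, hS, h0s, hsM, hpts⟩ := ereal_sSup_eq hMzpt
  obtain ⟨s', hS', h0s', hs'M, hpts'⟩ := ereal_sSup_eq hpt'0
  have hs'0 : s' ≤ 0 := hs'M
  -- goal 1
  have goal1 : ⊥ < execHamiltonian σ b g z p X := by
    rw [hHz, hS, ← EReal.coe_neg]
    exact EReal.bot_lt_coe _
  refine ⟨goal1, ?_⟩
  -- Lipschitz bounds
  have hmemz : z 2 ∈ Set.Ici (0:ℝ) := le_of_lt hz2'
  have hmemz' : z' 2 ∈ Set.Ici (0:ℝ) := le_of_lt hz'2'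
  have hσd : |σ (z 2) - σ (z' 2)| ≤ (Kσ:ℝ) * |z 2 - z' 2| := by
    have := hKσ.dist_le_mul (z 2) hmemz (z' 2) hmemz'
    rwa [Real.dist_eq, Real.dist_eq] at this
  have hbd : |b (z 2) - b (z' 2)| ≤ (Kb:ℝ) * |z 2 - z' 2| := by
    have := hKb.dist_le_mul (z 2) hmemz (z' 2) hmemz'
    rwa [Real.dist_eq, Real.dist_eq] at this
  have hσsq : (σ (z 2) - σ (z' 2)) ^ 2 ≤ (Kσ:ℝ) ^ 2 * (z 2 - z' 2) ^ 2 := by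
    have h1 : |σ (z 2) - σ (z' 2)| ^ 2 ≤ ((Kσ:ℝ) * |z 2 - z' 2|) ^ 2 :=
      pow_le_pow_left₀ (abs_nonneg _) hσd 2
    rwa [sq_abs, mul_pow, sq_abs] at h1
  have hmat : σ (z 2) ^ 2 * X 2 2 - σ (z' 2) ^ 2 * Y 2 2 ≤
      3 * α * ((Kσ:ℝ) ^ 2 * (z 2 - z' 2) ^ 2) := by
    have h1 := matrix_block_bound X Y α (σ (z 2)) (σ (z' 2)) hPSD2
    have h2 : 3 * α * (σ (z 2) - σ (z' 2)) ^ 2 ≤ 3 * α * ((Kσ:ℝ) ^ 2 * (z 2 - z' 2) ^ 2) :=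
      mul_le_mul_of_nonneg_left hσsq (by positivity)
    linarith
  have hbterm : (b (z 2) - b (z' 2)) * (α * (z 2 - z' 2)) ≤ α * ((Kb:ℝ) * (z 2 - z' 2) ^ 2) := by
    have h1 : (b (z 2) - b (z' 2)) * (z 2 - z' 2) ≤ (Kb:ℝ) * (z 2 - z' 2) ^ 2 := by
      calc (b (z 2) - b (z' 2)) * (z 2 - z' 2) ≤ |(b (z 2) - b (z' 2)) * (z 2 - z' 2)| :=
            le_abs_self _
        _ = |b (z 2) - b (z' 2)| * |z 2 - z' 2| := abs_mul _ _
        _ ≤ ((Kb:ℝ) * |z 2 - z' 2|) * |z 2 - z' 2| :=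
            mul_le_mul_of_nonneg_right hbd (abs_nonneg _)
        _ = (Kb:ℝ) * (z 2 - z' 2) ^ 2 := by
            rw [mul_assoc, ← sq_abs (z 2 - z' 2)]; ring
    calc (b (z 2) - b (z' 2)) * (α * (z 2 - z' 2))
        = α * ((b (z 2) - b (z' 2)) * (z 2 - z' 2)) := by ring
      _ ≤ α * ((Kb:ℝ) * (z 2 - z' 2) ^ 2) := mul_le_mul_of_nonneg_left h1 hα0.le
  -- ζ-term bound
  set C0 : ℝ := 3 * (Kσ:ℝ)^2 + (Kb:ℝ) + 1/(2*ε) + c₀ with hC0def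
  have hdiff : ∀ ζ, 0 ≤ ζ → fz ζ ≤ fz' ζ + C0 * α * N := by
    intro ζ hζ
    rw [hfze, hfz'e]
    have hzeta : ζ * ((z 2 - z' 2) * (α * (z 0 - z' 0))) -
        ((z 2 - z' 2) * (α * (z 2 - z' 2))) * g ζ ≤
        α * ((z 0 - z' 0) ^ 2 / (2 * ε)) + α * ((z 2 - z' 2) ^ 2 * c₀) := by
      rcases eq_or_lt_of_le hd2nn with heq | hlt
      · rw [← heq]
        simp
        positivity
      · have hq2 : 0 < (z 2 - z' 2) * (α * (z 2 - z' 2)) := by positivity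
        have hk := key ((z 2 - z' 2) * (α * (z 2 - z' 2)))
          ((z 2 - z' 2) * (α * (z 0 - z' 0))) ζ hq2 hζ
        have heq2 : ((z 2 - z' 2) * (α * (z 0 - z' 0))) ^ 2 /
            (2 * ((z 2 - z' 2) * (α * (z 2 - z' 2))) * ε) =
            α * ((z 0 - z' 0) ^ 2 / (2 * ε)) := by
          field_simp
        have heq3 : ((z 2 - z' 2) * (α * (z 2 - z' 2))) * c₀ =
            α * ((z 2 - z' 2) ^ 2 * c₀) := by ring
        rw [heq2, heq3] at hk
        linarith
    have hd0N : (z 0 - z' 0) ^ 2 ≤ N := by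
      rw [hNdef]; nlinarith [sq_nonneg (z 1 - z' 1), sq_nonneg (z 2 - z' 2)]
    have hd2N : (z 2 - z' 2) ^ 2 ≤ N := by
      rw [hNdef]; nlinarith [sq_nonneg (z 0 - z' 0), sq_nonneg (z 1 - z' 1)]
    have e1 : 3 * α * ((Kσ:ℝ) ^ 2 * (z 2 - z' 2) ^ 2) ≤ 3 * (Kσ:ℝ)^2 * α * N := by
      have h6 := mul_le_mul_of_nonneg_left hd2N (show (0:ℝ) ≤ 3 * (Kσ:ℝ)^2 * α by positivity)
      linarith
    have e2 : α * ((Kb:ℝ) * (z 2 - z' 2) ^ 2) ≤ (Kb:ℝ) * α * N := by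
      have h6 := mul_le_mul_of_nonneg_left hd2N
        (mul_nonneg Kb.coe_nonneg hα0.le)
      linarith
    have e3 : α * ((z 0 - z' 0) ^ 2 / (2 * ε)) ≤ 1/(2*ε) * α * N := by
      have h6 := mul_le_mul_of_nonneg_left hd0N
        (show (0:ℝ) ≤ 1/(2*ε) * α by positivity)
      have h7 : α * ((z 0 - z' 0) ^ 2 / (2 * ε)) = 1/(2*ε) * α * (z 0 - z' 0) ^ 2 := by ring
      linarith
    have e4 : α * ((z 2 - z' 2) ^ 2 * c₀) ≤ c₀ * α * N := by
      have h6 := mul_le_mul_of_nonneg_left hd2N (mul_nonneg hc₀ hα0.le)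
      linarith
    have hC0exp : C0 * α * N = 3 * (Kσ:ℝ)^2 * α * N + (Kb:ℝ) * α * N +
        1/(2*ε) * α * N + c₀ * α * N := by rw [hC0def]; ring
    have hpos : 0 ≤ (Kσ:ℝ) ^ 2 * α * N := by positivity
    clear_value c₀ N C0
    linarith [hpos, hmat, hbterm, hzeta, e1, e2, e3, e4, hC0exp.le, hC0exp.ge]
  -- conclude
  have hsgoal : s - s' ≤ C * (α * ‖z - z'‖ ^ 2 + ‖z - z'‖) := by
    have h1 : sSup ((fun ζ => ((fz ζ : ℝ) : EReal)) '' Set.Ici 0) ≤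
        ((s' + C0 * α * N : ℝ) : EReal) := by
      apply sSup_le
      rintro x ⟨ζ, hζ, rfl⟩
      apply EReal.coe_le_coe_iff.2
      have h2 := hdiff ζ hζ
      have h3 := hpts' ζ hζ
      linarith
    have h2 : s ≤ s' + C0 * α * N := EReal.coe_le_coe_iff.1 (hS ▸ h1)
    have hC0nn : 0 ≤ C0 := by rw [hC0def]; positivity
    have hCeq : C = C0 + 1 := by rw [hCdef, hC0def]
    rw [hnorm, hCeq]
    nlinarith [hnn, hN0, hα0.le, mul_nonneg hα0.le hN0]
  rw [hHz, hHz', hS, hS']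
  rw [← EReal.coe_neg, ← EReal.coe_neg, ← EReal.coe_sub]
  exact EReal.coe_le_coe_iff.2 (by linarith)
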